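/- Let g be a short sl₂-Lie superalgebra with M = {α ∈ g : hα = α} and triple product (m,n,r) := −[[m, f n], r]. Then the triple product satisfies: (m,n,s) = (−1)^{|m||n|}(n,m,s) + (m⋆n)•s for all homogeneous m, n, s ∈ M, where m⋆n = [m,n] and a•s = [a, f s]. -/
import Mathlib


/-- The Koszul sign `(-1)^{ij}` for parities `i j : ZMod 2`. -/
noncomputable def sg (i j : ZMod 2) : ℂ := (-1 : ℂ) ^ (i.val * j.val)

/-- A short `sl₂`-Lie superalgebra: a Z/2-graded complex Lie superalgebra `(G, B)`
together with operators `E F H` satisfying the `sl₂` relations, acting by even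
derivations, such that `G` is spanned by `H`-eigenvectors with eigenvalues in
`{-2,-1,0,1,2}` (which, over `ℂ`, is exactly the condition that `G` decomposes as an
`sl₂`-module into copies of the adjoint, the natural and the trivial representations,
i.e. `G ≅ sl₂⊗J ⊕ V⊗M ⊕ D`). -/
structure ShortSL2 {G : Type} [AddCommGroup G] [Module ℂ G]
    (gr : ZMod 2 → Submodule ℂ G)
    (B : G →ₗ[ℂ] G →ₗ[ℂ] G)
    (E F H : G →ₗ[ℂ] G) : Prop where
  bracket_grade : ∀ i j : ZMod 2, ∀ a ∈ gr i, ∀ b ∈ gr j, B a b ∈ gr (i + j)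
  antisymm : ∀ i j : ZMod 2, ∀ a ∈ gr i, ∀ b ∈ gr j, B a b = -(sg i j • B b a)
  jacobi : ∀ i j : ZMod 2, ∀ a ∈ gr i, ∀ b ∈ gr j, ∀ c : G,
      B a (B b c) = B (B a b) c + sg i j • B b (B a c)
  grade_spans : ∀ x : G, ∃ x0 x1 : G, x0 ∈ gr 0 ∧ x1 ∈ gr 1 ∧ x = x0 + x1
  rel_HE : H ∘ₗ E - E ∘ₗ H = 2 • E
  rel_HF : H ∘ₗ F - F ∘ₗ H = -(2 • F)
  rel_EF : E ∘ₗ F - F ∘ₗ E = H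
  derE : ∀ x y : G, E (B x y) = B (E x) y + B x (E y)
  derF : ∀ x y : G, F (B x y) = B (F x) y + B x (F y)
  derH : ∀ x y : G, H (B x y) = B (H x) y + B x (H y)
  evenE : ∀ i : ZMod 2, ∀ x ∈ gr i, E x ∈ gr i
  evenF : ∀ i : ZMod 2, ∀ x ∈ gr i, F x ∈ gr i
  evenH : ∀ i : ZMod 2, ∀ x ∈ gr i, H x ∈ gr i
  short : ∀ x : G, ∃ x2 x1 x0 y1 y2 : G,
      H x2 = (2 : ℂ) • x2 ∧ H x1 = x1 ∧ H x0 = 0 ∧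
      H y1 = (-1 : ℂ) • y1 ∧ H y2 = (-2 : ℂ) • y2 ∧ x = x2 + x1 + x0 + y1 + y2

/-- The triple product `(m,n,r) := −[[m, f n], r]` on `M = {m : H m = m}`. -/
noncomputable def trip {G : Type} [AddCommGroup G] [Module ℂ G]
    (B : G →ₗ[ℂ] G →ₗ[ℂ] G) (F : G →ₗ[ℂ] G) (m n r : G) : G :=
  -(B (B m (F n)) r)

/-- In a short `sl₂`-algebra, an `H`-eigenvector of eigenvalue `3` is zero. -/
theorem shortSL2_eigen_three_zero
    {G : Type} [AddCommGroup G] [Module ℂ G]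
    (gr : ZMod 2 → Submodule ℂ G)
    (B : G →ₗ[ℂ] G →ₗ[ℂ] G) (E F H : G →ₗ[ℂ] G)
    (h : ShortSL2 gr B E F H) (x : G) (hx : H x = (3:ℂ) • x) : x = 0 := by
  obtain ⟨x2, x1, x0, y1, y2, h2, h1, h0, hm1, hm2, hsum⟩ := h.short x
  set L : ℂ → (G →ₗ[ℂ] G) := fun c => H - c • LinearMap.id with hLdef
  have hL : ∀ (c μ : ℂ) (v : G), H v = μ • v → L c v = (μ - c) • v := by
    intro c μ v hv
    simp [hLdef, hv, sub_smul]
  have key : ∀ (μ : ℂ) (v : G), H v = μ • v →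
      L 2 (L 1 (L 0 (L (-1) (L (-2) v)))) =
        ((μ+2)*(μ+1)*μ*(μ-1)*(μ-2)) • v := by
    intro μ v hv
    rw [hL (-2) μ v hv, map_smul, hL (-1) μ v hv, smul_smul,
      map_smul, hL 0 μ v hv, smul_smul, map_smul, hL 1 μ v hv, smul_smul,
      map_smul, hL 2 μ v hv, smul_smul]
    ring_nf
  have k2 := key 2 x2 h2
  have k1 := key 1 x1 (by rw [h1, one_smul])
  have k0 := key 0 x0 (by rw [h0, zero_smul])
  have km1 := key (-1) y1 hm1
  have km2 := key (-2) y2 hm2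
  have kx := key 3 x hx
  norm_num at k2 k1 k0 km1 km2 kx
  have hz : L 2 (L 1 (L 0 (L (-1) (L (-2) x)))) = 0 := by
    conv_lhs => rw [hsum]
    simp only [map_add, k2, k1, k0, km1, km2]
    abel
  rw [kx] at hz
  have h120 : x = (120:ℂ)⁻¹ • ((120:ℂ) • x) := by
    rw [smul_smul]; norm_num
  rw [h120, hz, smul_zero]

/-- In a short `sl₂`-Lie superalgebra,
`(m,n,s) = (−1)^{|m||n|}(n,m,s) + (m⋆n)•s`, with `m⋆n = [m,n]` and `a•s = [a, f s]`. -/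
theorem shortSL2_trip_SJT4
    {G : Type} [AddCommGroup G] [Module ℂ G]
    (gr : ZMod 2 → Submodule ℂ G)
    (B : G →ₗ[ℂ] G →ₗ[ℂ] G) (E F H : G →ₗ[ℂ] G)
    (h : ShortSL2 gr B E F H) :
    ∀ pm pn ps : ZMod 2, ∀ m ∈ gr pm, ∀ n ∈ gr pn, ∀ s ∈ gr ps,
      H m = m → H n = n → H s = s →
      trip B F m n s = sg pm pn • trip B F n m s + B (B m n) (F s) := by
  intro pm pn ps m hm n hn s hs hHm hHn hHs
  -- `[m,n]` has eigenvalue 2, so `[[m,n],s]` has eigenvalue 3, hence vanishes.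
  have hHmn : H (B m n) = (2:ℂ) • B m n := by
    rw [h.derH, hHm, hHn, two_smul]
  have hzero : B (B m n) s = 0 := by
    apply shortSL2_eigen_three_zero gr B E F H h
    rw [h.derH, hHmn, hHs, map_smul]
    have h3 : (3:ℂ) = 2 + 1 := by norm_num
    rw [h3, add_smul, one_smul, LinearMap.smul_apply]
  -- hence `[F[m,n], s] = -[[m,n], F s]`
  have hF1 : B (F (B m n)) s = -(B (B m n) (F s)) := by
    have hd := h.derF (B m n) s
    rw [hzero, map_zero] at hd
    exact eq_neg_of_add_eq_zero_left hd.symm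
  -- rewrite `[m, F n]` using the derivation property of `F` and antisymmetry
  have hanti : B (F m) n = -(sg pm pn • B n (F m)) :=
    h.antisymm pm pn (F m) (h.evenF pm m hm) n hn
  have hBmFn : B m (F n) = F (B m n) + sg pm pn • B n (F m) := by
    have hd := h.derF m n
    rw [hanti] at hd
    rw [hd]
    abel
  unfold trip
  rw [hBmFn, map_add, map_smul, LinearMap.add_apply, LinearMap.smul_apply, hF1]
  rw [smul_neg]
  abel
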